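/- (Table 3, first row: Nash equilibria with γ* = 0 and interior strategies.) Assume r_A = r_D ≤ 1. Let β* ∈ [r_D, 1] satisfy ((β*)²/(r_D + (β*)²))² ≤ 1/2 + q_I, and set α* = r_D/β*. Then α* ∈ (0,1] and (α*, β*, 0) is a Nash equilibrium of the game with objectives (J_A, J_D, J_I): J_A(α*,β*,0) ≤ J_A(α,β*,0) for all α ∈ (0,1], J_D(α*,β*,0) ≤ J_D(α*,β,0) for all β ∈ (0,1], and J_I(α*,β*,0) ≥ J_I(α*,β*,γ) for all γ ∈ [0,1]. -/

import Mathlib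

/-- Attacker's average cost. -/
noncomputable def JA (pA qA α β γ : ℝ) : ℝ :=
  (pA * (1 - γ) ^ 2 + qA * α ^ 2 + γ ^ 2) * (β / (α + β)) ^ 2

/-- Defender's average cost. -/
noncomputable def JD (pD qD α β γ : ℝ) : ℝ :=
  (pD * (1 - γ) ^ 2 + qD * β ^ 2 + γ ^ 2) * (α / (α + β)) ^ 2

/-- Insider's average profit. -/
noncomputable def JI (pI qI α β γ : ℝ) : ℝ :=
  (pI + γ ^ 2) * (β / (α + β)) ^ 2 - (qI * γ + γ ^ 2 / 2)

/-- Attacker's reduced cost (no cooperation with the insider): J_A⁰(α,β) = J_A(α,β,0). -/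
noncomputable def JA0 (pA qA α β : ℝ) : ℝ := JA pA qA α β 0

/-- Defender's reduced cost (unaware of the insider): J_D⁰(α,β) = J_D(α,β,0). -/
noncomputable def JD0 (pD qD α β : ℝ) : ℝ := JD pD qD α β 0


/-- Table 3, first row: Nash equilibria with γ* = 0 and interior strategies. -/
theorem table3_first_row (pA pD pI qA qD qI rA rD : ℝ)
    (hpA : pA ∈ Set.Ioo (0:ℝ) 1) (hpD : pD ∈ Set.Ioo (0:ℝ) 1) (hpI : pI ∈ Set.Ioo (0:ℝ) 1)
    (hqA : 0 < qA) (hqD : 0 < qD) (hqI : 0 ≤ qI)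
    (hrA : rA = pA / qA) (hrD : rD = pD / qD)
    (h1 : rA = rD) (h2 : rD ≤ 1)
    (βs : ℝ) (hβs : βs ∈ Set.Icc rD 1)
    (hβcond : (βs ^ 2 / (rD + βs ^ 2)) ^ 2 ≤ 1 / 2 + qI)
    (αs : ℝ) (hαs : αs = rD / βs) :
    αs ∈ Set.Ioc (0:ℝ) 1 ∧
    (∀ α ∈ Set.Ioc (0:ℝ) 1, JA pA qA αs βs 0 ≤ JA pA qA α βs 0) ∧
    (∀ β ∈ Set.Ioc (0:ℝ) 1, JD pD qD αs βs 0 ≤ JD pD qD αs β 0) ∧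
    (∀ γ ∈ Set.Icc (0:ℝ) 1, JI pI qI αs βs γ ≤ JI pI qI αs βs 0) := by
  obtain ⟨hpA0, hpA1⟩ := hpA
  obtain ⟨hpD0, hpD1⟩ := hpD
  obtain ⟨hβlo, hβhi⟩ := hβs
  have hrDpos : 0 < rD := by rw [hrD]; positivity
  have hβpos : 0 < βs := lt_of_lt_of_le hrDpos hβlo
  have hαpos : 0 < αs := by rw [hαs]; positivity
  have hαle : αs ≤ 1 := by
    rw [hαs, div_le_one hβpos]; exact hβlo
  have hαβ : αs * βs = rD := by
    rw [hαs]; field_simp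
  have hpAeq : pA = qA * (αs * βs) := by
    rw [hαβ, ← h1, hrA]; field_simp
  have hpDeq : pD = qD * (αs * βs) := by
    rw [hαβ, hrD]; field_simp
  have hsum : 0 < αs + βs := by positivity
  refine ⟨⟨hαpos, hαle⟩, ?_, ?_, ?_⟩
  · intro α hα
    obtain ⟨hα0, hα1⟩ := hα
    have hd : 0 < α + βs := by positivity
    have e : ∀ x : ℝ, 0 < x + βs →
        JA pA qA x βs 0 = (pA + qA * x ^ 2) * βs ^ 2 / (x + βs) ^ 2 := by
      intro x hx
      simp only [JA]
      field_simp
      ring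
    rw [e αs hsum, e α hd, div_le_div_iff₀ (by positivity) (by positivity), hpAeq]
    nlinarith [mul_nonneg (mul_nonneg (mul_nonneg (mul_nonneg hqA.le hsum.le) hβpos.le)
      (sq_nonneg (α - αs))) (sq_nonneg βs)]
  · intro β hβ
    obtain ⟨hβ0, hβ1⟩ := hβ
    have hd : 0 < αs + β := by positivity
    have e : ∀ x : ℝ, 0 < αs + x →
        JD pD qD αs x 0 = (pD + qD * x ^ 2) * αs ^ 2 / (αs + x) ^ 2 := by
      intro x hx
      simp only [JD]
      field_simp
      ring
    rw [e βs hsum, e β hd, div_le_div_iff₀ (by positivity) (by positivity), hpDeq]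
    nlinarith [mul_nonneg (mul_nonneg (mul_nonneg (mul_nonneg hqD.le hsum.le) hαpos.le)
      (sq_nonneg (β - βs))) (sq_nonneg αs)]
  · intro γ hγ
    obtain ⟨hγ0, hγ1⟩ := hγ
    have hne : rD + βs ^ 2 ≠ 0 := by positivity
    have hk : βs / (αs + βs) = βs ^ 2 / (rD + βs ^ 2) := by
      rw [div_eq_div_iff (ne_of_gt hsum) hne]
      rw [hαs]
      field_simp
    have hk2 : (βs / (αs + βs)) ^ 2 ≤ 1 / 2 + qI := by rw [hk]; exact hβcond
    have hγ2 : γ ^ 2 ≤ γ := by nlinarith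
    simp only [JI]
    have hknn : 0 ≤ (βs / (αs + βs)) ^ 2 := sq_nonneg _
    nlinarith [mul_le_mul_of_nonneg_left hk2 (sq_nonneg γ),
      mul_nonneg hqI (sub_nonneg.2 hγ2)]
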